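/- For every θ ∈ {1,…,S} and ρ ∈ (0,1], the distribution d^{θ+1} first-order stochastically dominates d^θ: for every x ∈ {1,…,S}, Σ_{z=x}^S d^{θ+1}(z) ≥ Σ_{z=x}^S d^θ(z). -/
import Mathlib


open Finset

/-- β_{θ,ρ} = 1/(θ-1+1/ρ) -/
noncomputable def bet (ρ : ℝ) (θ : ℕ) : ℝ := 1 / ((θ : ℝ) - 1 + 1 / ρ)

/-- Stationary distribution d^θ on {1,…,S} under the threshold policy θ;
for θ = S+1 it is the point mass at S. -/
noncomputable def dstat (S : ℕ) (ρ : ℝ) (θ : ℕ) (z : ℕ) : ℝ :=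
  if θ = S + 1 then (if z = S then 1 else 0)
  else if z < θ then bet ρ θ
  else if z < S then (1 - ρ) ^ (z - θ) * bet ρ θ
  else (1 - ρ) ^ (S - θ) * bet ρ θ / ρ

lemma denom_pos (ρ : ℝ) (hρ0 : 0 < ρ) (θ : ℕ) (hθ : 1 ≤ θ) :
    0 < (θ : ℝ) - 1 + 1 / ρ := by
  have h1 : (1:ℝ) ≤ (θ:ℝ) := by exact_mod_cast hθ
  have h2 : 0 < 1 / ρ := by positivity
  linarith

lemma bet_pos (ρ : ℝ) (hρ0 : 0 < ρ) (θ : ℕ) (hθ : 1 ≤ θ) :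
    0 < bet ρ θ := by
  have := denom_pos ρ hρ0 θ hθ
  unfold bet; positivity

/-- Closed form for the tail sum. -/
lemma tail_aux (S θ : ℕ) (ρ : ℝ) (hρ0 : 0 < ρ) (hθS : θ ≤ S) :
    ∀ n x, x + n = S → 1 ≤ x →
    ∑ z ∈ Icc x S, dstat S ρ θ z =
      if x ≤ θ then bet ρ θ * (((θ - x : ℕ) : ℝ) + 1 / ρ)
      else bet ρ θ * (1 - ρ) ^ (x - θ) / ρ := by
  intro n
  induction n with
  | zero =>
    intro x hx _
    have hxS : x = S := by omega
    rw [hxS, Icc_self, Finset.sum_singleton]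
    have hne : θ ≠ S + 1 := by omega
    have hd : dstat S ρ θ S = (1 - ρ) ^ (S - θ) * bet ρ θ / ρ := by
      simp [dstat, hne, Nat.not_lt.mpr hθS]
    rw [hd]
    by_cases h : S ≤ θ
    · rw [if_pos h]
      have hθ' : θ = S := le_antisymm hθS h
      rw [hθ']
      simp
      ring
    · rw [if_neg h]
      ring
  | succ n ih =>
    intro x hx hx1
    have hxS : x + 1 ≤ S := by omega
    have hsplit : Icc x S = insert x (Icc (x + 1) S) := by
      rw [Finset.Icc_add_one_left_eq_Ioc, Finset.Ioc_insert_left (by omega)]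
    rw [hsplit, Finset.sum_insert (by simp)]
    rw [ih (x + 1) (by omega) (by omega)]
    have hne : θ ≠ S + 1 := by omega
    by_cases hxθ : x < θ
    · -- d(x) = bet, and x+1 ≤ θ
      have hd : dstat S ρ θ x = bet ρ θ := by simp [dstat, hne, hxθ]
      have h1 : x + 1 ≤ θ := hxθ
      rw [hd, if_pos h1, if_pos (le_of_lt hxθ)]
      have c1 : ((θ - (x+1) : ℕ) : ℝ) = (θ : ℝ) - x - 1 := by
        push_cast [Nat.cast_sub h1]; ring
      have c2 : ((θ - x : ℕ) : ℝ) = (θ : ℝ) - x := by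
        push_cast [Nat.cast_sub (le_of_lt hxθ)]; ring
      rw [c1, c2]; ring
    · -- x ≥ θ, x < S
      push_neg at hxθ
      have hd : dstat S ρ θ x = (1 - ρ) ^ (x - θ) * bet ρ θ := by
        simp [dstat, hne, Nat.not_lt.mpr hxθ, show x < S by omega]
      rw [hd]
      have hk : x + 1 - θ = (x - θ) + 1 := by omega
      have goal2 : (1 - ρ) ^ (x - θ) * bet ρ θ +
          bet ρ θ * (1 - ρ) ^ ((x - θ) + 1) / ρ = bet ρ θ * (1 - ρ) ^ (x - θ) / ρ := by
        field_simp
        ring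
      by_cases hx1θ : x + 1 ≤ θ
      · omega
      · rw [if_neg hx1θ, hk, goal2]
        by_cases hxeq : x ≤ θ
        · have : x = θ := le_antisymm hxeq hxθ
          subst this
          simp [div_eq_mul_inv]
        · rw [if_neg hxeq]

lemma tail_eq (S θ : ℕ) (ρ : ℝ) (hρ0 : 0 < ρ) (hθS : θ ≤ S)
    (x : ℕ) (hx1 : 1 ≤ x) (hxS : x ≤ S) :
    ∑ z ∈ Icc x S, dstat S ρ θ z =
      if x ≤ θ then bet ρ θ * (((θ - x : ℕ) : ℝ) + 1 / ρ)
      else bet ρ θ * (1 - ρ) ^ (x - θ) / ρ :=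
  tail_aux S θ ρ hρ0 hθS (S - x) x (by omega) hx1

/-- The key one-step inequality: β_θ (1-ρ) ≤ β_{θ+1}. -/
lemma bet_step (ρ : ℝ) (hρ0 : 0 < ρ) (hρ1 : ρ ≤ 1) (θ : ℕ) (hθ : 1 ≤ θ) :
    bet ρ θ * (1 - ρ) ≤ bet ρ (θ + 1) := by
  have h1 := denom_pos ρ hρ0 θ hθ
  have h2 := denom_pos ρ hρ0 (θ + 1) (by omega)
  have hθ' : (1:ℝ) ≤ (θ:ℝ) := by exact_mod_cast hθ
  have hinv : ρ * (1 / ρ) = 1 := by field_simp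
  unfold bet
  rw [div_mul_eq_mul_div, div_le_div_iff₀ h1 h2]
  push_cast
  nlinarith [mul_nonneg hρ0.le (le_trans zero_le_one hθ' : (0:ℝ) ≤ θ)]

/-- d^{θ+1} first-order stochastically dominates d^θ. -/
theorem dstat_stochastic_dominance
    (S : ℕ) (hS : 2 ≤ S) (ρ : ℝ) (hρ0 : 0 < ρ) (hρ1 : ρ ≤ 1)
    (θ : ℕ) (hθ : θ ∈ Finset.Icc 1 S) :
    ∀ x ∈ Finset.Icc 1 S,
      ∑ z ∈ Finset.Icc x S, dstat S ρ θ z ≤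
        ∑ z ∈ Finset.Icc x S, dstat S ρ (θ + 1) z := by
  rw [Finset.mem_Icc] at hθ
  obtain ⟨hθ1, hθS⟩ := hθ
  intro x hx
  rw [Finset.mem_Icc] at hx
  obtain ⟨hx1, hxS⟩ := hx
  have hb := bet_pos ρ hρ0 θ hθ1
  have hb' := bet_pos ρ hρ0 (θ + 1) (by omega)
  have hρ' : (0:ℝ) < 1 / ρ := by positivity
  have h1ρ : (0:ℝ) ≤ 1 - ρ := by linarith
  have hinv : ρ * (1 / ρ) = 1 := by field_simp
  rw [tail_eq S θ ρ hρ0 hθS x hx1 hxS]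
  by_cases hθtop : θ = S
  · -- RHS is the point mass at S, tail = 1
    have hRHS : ∑ z ∈ Finset.Icc x S, dstat S ρ (θ + 1) z = 1 := by
      have hz : ∀ z, dstat S ρ (θ + 1) z = if z = S then 1 else 0 := by
        intro z; simp [dstat, hθtop]
      simp only [hz]
      rw [Finset.sum_ite_eq' (Finset.Icc x S) S (fun _ => (1:ℝ))]
      simp [Finset.mem_Icc, hxS]
    rw [hRHS, if_pos (by omega : x ≤ θ)]
    have hcast : ((θ - x : ℕ) : ℝ) = (θ : ℝ) - x := by
      push_cast [Nat.cast_sub (by omega : x ≤ θ)]; ring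
    have hx1' : (1:ℝ) ≤ (x:ℝ) := by exact_mod_cast hx1
    have hden := denom_pos ρ hρ0 θ hθ1
    have h1 : bet ρ θ * ((θ:ℝ) - 1 + 1 / ρ) = 1 := by
      unfold bet; rw [one_div, inv_mul_cancel₀ hden.ne']
    calc bet ρ θ * (((θ - x : ℕ) : ℝ) + 1 / ρ)
        ≤ bet ρ θ * ((θ:ℝ) - 1 + 1 / ρ) := by
          apply mul_le_mul_of_nonneg_left _ (le_of_lt hb)
          rw [hcast]; linarith
      _ = 1 := h1
  · have hθS' : θ + 1 ≤ S := by omega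
    rw [tail_eq S (θ + 1) ρ hρ0 hθS' x hx1 hxS]
    by_cases hc1 : x ≤ θ
    · rw [if_pos hc1, if_pos (by omega)]
      have hc2 : ((θ + 1 - x : ℕ) : ℝ) = ((θ - x : ℕ) : ℝ) + 1 := by
        push_cast [Nat.cast_sub hc1, Nat.cast_sub (show x ≤ θ + 1 by omega)]; ring
      rw [hc2]
      set t : ℝ := ((θ - x : ℕ) : ℝ) with ht
      have ht0 : 0 ≤ t := Nat.cast_nonneg _
      have htle : t ≤ (θ:ℝ) - 1 := by
        rw [ht, Nat.cast_sub hc1]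
        have : (1:ℝ) ≤ (x:ℝ) := by exact_mod_cast hx1
        push_cast
        linarith
      have h1 := denom_pos ρ hρ0 θ hθ1
      have h2 := denom_pos ρ hρ0 (θ + 1) (by omega)
      unfold bet
      rw [div_mul_eq_mul_div, div_mul_eq_mul_div, div_le_div_iff₀ h1 h2]
      push_cast
      nlinarith [htle, ht0]
    · rw [if_neg hc1]
      push_neg at hc1
      have hstep := bet_step ρ hρ0 hρ1 θ hθ1
      by_cases hc2 : x ≤ θ + 1
      · have hx' : x = θ + 1 := by omega
        subst hx'
        rw [if_pos le_rfl]
        simp only [Nat.sub_self, Nat.cast_zero, zero_add]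
        have h3 : θ + 1 - θ = 1 := by omega
        rw [h3, pow_one]
        rw [div_le_iff₀ hρ0]
        calc bet ρ θ * (1 - ρ) ≤ bet ρ (θ + 1) := hstep
          _ = bet ρ (θ + 1) * (1 / ρ) * ρ := by field_simp
      · rw [if_neg hc2]
        push_neg at hc2
        have hk : x - θ = (x - (θ + 1)) + 1 := by omega
        rw [hk, pow_succ]
        rw [div_le_div_iff₀ hρ0 hρ0]
        have hpow : (0:ℝ) ≤ (1 - ρ) ^ (x - (θ + 1)) := pow_nonneg h1ρ _
        calc bet ρ θ * ((1 - ρ) ^ (x - (θ + 1)) * (1 - ρ)) * ρ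
            = (bet ρ θ * (1 - ρ)) * (1 - ρ) ^ (x - (θ + 1)) * ρ := by ring
          _ ≤ bet ρ (θ + 1) * (1 - ρ) ^ (x - (θ + 1)) * ρ := by
              apply mul_le_mul_of_nonneg_right _ (le_of_lt hρ0)
              exact mul_le_mul_of_nonneg_right hstep hpow
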